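/- arXiv:2003.04912 — 2 statements merged into one kernel-verified Lean document; each statement's English description precedes it below -/
import Mathlib

section
/- For n ≥ 1, the number of pop-stacked permutations of size n with exactly two runs equals 2^n − 2n. -/
/-- Split a list into maximal strictly decreasing contiguous blocks ("falls"). -/
def fallSplit : List ℕ → List (List ℕ)
  | [] => []
  | a :: rest =>
    match fallSplit rest with
    | (b :: bs) :: gs => if b < a then (a :: b :: bs) :: gs else [a] :: (b :: bs) :: gs
    | gs => [a] :: gs

/-- Split a list into maximal strictly increasing contiguous blocks ("runs"). -/
def runSplit : List ℕ → List (List ℕ)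
  | [] => []
  | a :: rest =>
    match runSplit rest with
    | (b :: bs) :: gs => if a < b then (a :: b :: bs) :: gs else [a] :: (b :: bs) :: gs
    | gs => [a] :: gs

/-- The flip transformation `T`: reverse every fall. -/
def flipT (l : List ℕ) : List ℕ := ((fallSplit l).map List.reverse).flatten

/-- `l` is the one-line notation of a permutation of `{1, …, n}`. -/
def IsPermList (n : ℕ) (l : List ℕ) : Prop := l.Perm (List.range' 1 n)

/-- Every pair of adjacent runs overlaps: `min R₁ < max R₂` (pop-stacked condition). -/
def Overlapping (l : List ℕ) : Prop :=
  ∀ R₁ R₂ : List ℕ, [R₁, R₂] <:+: runSplit l → ∃ a ∈ R₁, ∃ b ∈ R₂, a < b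

-- small sorted-list lemmas
lemma sorted_head_le {l : List ℕ} (h : l.Pairwise (· ≤ ·)) {x : ℕ} (hx : x ∈ l)
    (hne : l ≠ []) : l.head hne ≤ x := by
  cases l with
  | nil => simp at hx
  | cons a t =>
    rcases List.mem_cons.mp hx with rfl | hx
    · simp
    · exact (List.pairwise_cons.mp h).1 x hx

lemma sorted_le_getLast {l : List ℕ} (h : l.Pairwise (· ≤ ·)) {x : ℕ} (hx : x ∈ l)
    (hne : l ≠ []) : x ≤ l.getLast hne := by
  induction l with
  | nil => simp at hx
  | cons a t ih =>
    cases t with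
    | nil => simp at hx; simp [hx]
    | cons b t' =>
      rw [List.getLast_cons (by simp)]
      rcases List.mem_cons.mp hx with rfl | hx
      · exact le_trans ((List.pairwise_cons.mp h).1 _ (List.getLast_mem _))
          (le_refl _)
      · exact ih (List.pairwise_cons.mp h).2 hx (by simp)

lemma sort_chain_lt (s : Finset ℕ) : (s.sort (· ≤ ·)).Chain' (· < ·) :=
  List.isChain_iff_pairwise.mpr (((Finset.pairwise_sort s _).and (Finset.sort_nodup s _)).imp (fun h => lt_of_le_of_ne h.1 h.2))

-- perm of Icc toList with range'
lemma icc_toList_perm (n : ℕ) : (Finset.Icc 1 n).toList.Perm (List.range' 1 n) := by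
  refine (List.perm_ext_iff_of_nodup (Finset.nodup_toList _) (List.nodup_range' (s := 1) (n := n))).mpr ?_
  intro x
  simp [List.mem_range'_1, Finset.mem_toList]
  omega

-- re-import structural lemmas (copied later into final file)
lemma runSplit_cons (a : ℕ) (rest : List ℕ) :
    runSplit (a :: rest) =
    match runSplit rest with
    | (b :: bs) :: gs => if a < b then (a :: b :: bs) :: gs else [a] :: (b :: bs) :: gs
    | gs => [a] :: gs := rfl

lemma runSplit_single : ∀ (A : List ℕ) (a : ℕ), A.Chain' (· < ·) → A.head? = some a →
    runSplit A = [A] := by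
  intro A
  induction A with
  | nil => simp
  | cons a' A' ih =>
    intro a hc _
    rcases A' with _ | ⟨b, A''⟩
    · rfl
    · have hab : a' < b := (List.isChain_cons_cons.mp hc).1
      have := ih b (List.isChain_cons_cons.mp hc).2 rfl
      rw [runSplit_cons, this]
      simp [hab]

lemma runSplit_head : ∀ (a : ℕ) (rest : List ℕ),
    ∃ bs gs, runSplit (a :: rest) = (a :: bs) :: gs := by
  intro a rest
  rw [runSplit_cons]
  rcases runSplit rest with _ | ⟨_ | ⟨b, bs⟩, gs⟩
  · exact ⟨[], [], rfl⟩
  · exact ⟨[], [] :: gs, rfl⟩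
  · by_cases h : a < b
    · exact ⟨b :: bs, gs, by simp [h]⟩
    · exact ⟨[], (b :: bs) :: gs, by simp [h]⟩

lemma runSplit_append : ∀ (A : List ℕ) (a b : ℕ) (B : List ℕ),
    (a :: A).Chain' (· < ·) → ¬ (a :: A).getLast (by simp) < b →
    runSplit ((a :: A) ++ b :: B) = (a :: A) :: runSplit (b :: B) := by
  intro A
  induction A with
  | nil =>
    intro a b B _ h2
    simp at h2
    obtain ⟨bs, gs, hbs⟩ := runSplit_head b B
    rw [List.singleton_append, runSplit_cons, hbs]
    simp [h2]
  | cons a' A' ih =>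
    intro a b B h1 h2
    have hab : a < a' := (List.isChain_cons_cons.mp h1).1
    have h2' : ¬ (a' :: A').getLast (by simp) < b := by
      rwa [List.getLast_cons (by simp)] at h2
    have := ih a' b B (List.isChain_cons_cons.mp h1).2 h2'
    rw [List.cons_append, runSplit_cons, this]
    simp [hab]

lemma runSplit_two (A B : List ℕ) (hA : A.Chain' (· < ·)) (hB : B.Chain' (· < ·))
    (hAne : A ≠ []) (hBne : B ≠ [])
    (h : ¬ A.getLast hAne < B.head hBne) : runSplit (A ++ B) = [A, B] := by
  obtain ⟨a, A', rfl⟩ := List.exists_cons_of_ne_nil hAne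
  obtain ⟨b, B', rfl⟩ := List.exists_cons_of_ne_nil hBne
  rw [runSplit_append A' a b B' hA (by simpa using h),
    runSplit_single (b :: B') b hB rfl]

def Good (n : ℕ) (S : Finset ℕ) : Prop :=
  (∃ a ∈ S, ∃ b ∈ Finset.Icc 1 n \ S, b < a) ∧
  (∃ a ∈ S, ∃ b ∈ Finset.Icc 1 n \ S, a < b)

def listOf (n : ℕ) (S : Finset ℕ) : List ℕ :=
  S.sort (· ≤ ·) ++ ((Finset.Icc 1 n) \ S).sort (· ≤ ·)

lemma runSplit_listOf {n : ℕ} {S : Finset ℕ} (hG : Good n S) :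
    runSplit (listOf n S) =
      [S.sort (· ≤ ·), ((Finset.Icc 1 n) \ S).sort (· ≤ ·)] := by
  obtain ⟨⟨a, ha, b, hb, hba⟩, -⟩ := hG
  have hAne : S.sort (· ≤ ·) ≠ [] := by
    intro h
    have := (Finset.mem_sort (α := ℕ) (· ≤ ·)).mpr ha
    rw [h] at this; simp at this
  have hBne : ((Finset.Icc 1 n) \ S).sort (· ≤ ·) ≠ [] := by
    intro h
    have := (Finset.mem_sort (α := ℕ) (· ≤ ·)).mpr hb
    rw [h] at this; simp at this
  refine runSplit_two _ _ (sort_chain_lt S) (sort_chain_lt _) hAne hBne ?_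
  have h1 : a ≤ (S.sort (· ≤ ·)).getLast hAne :=
    sorted_le_getLast (Finset.pairwise_sort _ _) ((Finset.mem_sort _).mpr ha) hAne
  have h2 : (((Finset.Icc 1 n) \ S).sort (· ≤ ·)).head hBne ≤ b :=
    sorted_head_le (Finset.pairwise_sort _ _) ((Finset.mem_sort _).mpr hb) hBne
  omega

lemma isPermList_listOf {n : ℕ} {S : Finset ℕ} (hsub : S ⊆ Finset.Icc 1 n) :
    IsPermList n (listOf n S) := by
  unfold IsPermList listOf
  refine (List.perm_ext_iff_of_nodup ?_ (List.nodup_range' (s := 1) (n := n))).mpr ?_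
  · rw [List.nodup_append']
    refine ⟨Finset.sort_nodup _ _, Finset.sort_nodup _ _, ?_⟩
    intro x hx hx'
    rw [Finset.mem_sort] at hx hx'
    exact (Finset.mem_sdiff.mp hx').2 hx
  · intro x
    simp only [List.mem_append, Finset.mem_sort, Finset.mem_sdiff, Finset.mem_Icc,
      List.mem_range'_1]
    constructor
    · rintro (hx | ⟨⟨h1, h2⟩, -⟩)
      · have := hsub hx
        rw [Finset.mem_Icc] at this
        omega
      · omega
    · intro hx
      by_cases hS : x ∈ S
      · exact Or.inl hS
      · exact Or.inr ⟨⟨by omega, by omega⟩, hS⟩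

lemma overlapping_listOf {n : ℕ} {S : Finset ℕ} (hG : Good n S) :
    Overlapping (listOf n S) := by
  intro R₁ R₂ hinf
  rw [runSplit_listOf hG] at hinf
  have hsub := hinf.sublist
  have hlen := hsub.eq_of_length (by simp)
  obtain ⟨rfl, rfl⟩ : R₁ = S.sort (· ≤ ·) ∧
      R₂ = ((Finset.Icc 1 n) \ S).sort (· ≤ ·) := by
    have := hlen
    simp only [List.cons.injEq] at this
    exact ⟨this.1, this.2.1⟩
  obtain ⟨-, a, ha, b, hb, hab⟩ := hG
  exact ⟨a, (Finset.mem_sort _).mpr ha, b, (Finset.mem_sort _).mpr hb, hab⟩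

lemma flatten_runSplit : ∀ l : List ℕ, (runSplit l).flatten = l := by
  intro l
  induction l with
  | nil => rfl
  | cons a rest ih =>
    rw [runSplit_cons]
    rcases h : runSplit rest with _ | ⟨_ | ⟨b, bs⟩, gs⟩ <;>
      simp_all <;> split <;> simp_all

lemma listOf_inj {n : ℕ} {S S' : Finset ℕ} (hG : Good n S) (hG' : Good n S')
    (h : listOf n S = listOf n S') : S = S' := by
  have h1 := runSplit_listOf hG
  rw [h, runSplit_listOf hG'] at h1
  have h2 : S.sort (· ≤ ·) = S'.sort (· ≤ ·) := by
    simp only [List.cons.injEq] at h1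
    exact h1.1.symm
  ext x
  rw [← Finset.mem_sort (α := ℕ) (· ≤ ·), h2, Finset.mem_sort]

def Bnd (A B : List ℕ) : Prop := ∀ x ∈ A.getLast?, ∀ y ∈ B.head?, ¬ x < y

lemma runSplit_ne_nil : ∀ (l : List ℕ), ∀ g ∈ runSplit l, g ≠ [] := by
  intro l
  induction l with
  | nil => simp [runSplit]
  | cons a rest ih =>
    intro g hg
    rw [runSplit_cons] at hg
    rcases h : runSplit rest with _ | ⟨g0, gs0⟩ <;> rw [h] at hg
    · simp at hg; simp [hg]
    · rcases g0 with _ | ⟨b, bs⟩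
      · exact absurd rfl (ih [] (by rw [h]; simp))
      · by_cases hab : a < b <;> simp [hab] at hg
        · rcases hg with hg | hg
          · simp [hg]
          · exact ih _ (by rw [h]; simp [hg])
        · rcases hg with hg | hg | hg
          · simp [hg]
          · simp [hg]
          · exact ih _ (by rw [h]; simp [hg])

lemma runSplit_chain : ∀ (l : List ℕ), ∀ g ∈ runSplit l, g.Chain' (· < ·) := by
  intro l
  induction l with
  | nil => simp [runSplit]
  | cons a rest ih =>
    intro g hg
    rw [runSplit_cons] at hg
    rcases h : runSplit rest with _ | ⟨_ | ⟨b, bs⟩, gs⟩ <;> rw [h] at hg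
    · simp at hg; simp [hg, List.Chain']
    · simp at hg
      rcases hg with hg | hg | hg
      · simp [hg, List.Chain']
      · simp [hg, List.Chain']
      · exact ih _ (by rw [h]; simp [hg])
    · by_cases hab : a < b <;> simp [hab] at hg
      · rcases hg with hg | hg
        · subst hg
          have := ih (b :: bs) (by rw [h]; simp)
          exact List.IsChain.cons_cons hab this
        · exact ih _ (by rw [h]; simp [hg])
      · rcases hg with hg | hg | hg
        · simp [hg, List.Chain']
        · exact ih _ (by rw [h]; simp [hg])
        · exact ih _ (by rw [h]; simp [hg])

lemma runSplit_boundary : ∀ (l : List ℕ), (runSplit l).Chain' Bnd := by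
  intro l
  induction l with
  | nil => simp [runSplit, List.Chain']
  | cons a rest ih =>
    rw [runSplit_cons]
    rcases h : runSplit rest with _ | ⟨_ | ⟨b, bs⟩, gs⟩ <;> rw [h] at ih
    · simp [List.Chain']
    · refine List.IsChain.cons_cons ?_ ih
      intro x hx y hy; simp at hy
    · by_cases hab : a < b <;> simp only [hab, if_true, if_false]
      · rw [List.Chain', List.isChain_cons] at ih ⊢
        refine ⟨?_, ih.2⟩
        intro g hg
        have := ih.1 g hg
        intro x hx y hy
        refine this x ?_ y hy
        simpa using hx
      · refine List.IsChain.cons_cons ?_ ih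
        intro x hx y hy
        simp at hx hy
        subst hx; subst hy; exact hab

lemma good_of_popStacked {n : ℕ} {l : List ℕ} (h1 : IsPermList n l) (h2 : Overlapping l)
    (h3 : (runSplit l).length = 2) :
    ∃ S : Finset ℕ, S ⊆ Finset.Icc 1 n ∧ Good n S ∧ listOf n S = l := by
  rcases h : runSplit l with _ | ⟨A, _ | ⟨B, _ | _⟩⟩ <;> rw [h] at h3 <;> simp at h3
  clear h3
  have hflat : A ++ B = l := by
    have := flatten_runSplit l
    rw [h] at this
    simpa using this
  have hchainA : A.Chain' (· < ·) := runSplit_chain l A (by rw [h]; simp)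
  have hchainB : B.Chain' (· < ·) := runSplit_chain l B (by rw [h]; simp)
  have hAne : A ≠ [] := runSplit_ne_nil l A (by rw [h]; simp)
  have hBne : B ≠ [] := runSplit_ne_nil l B (by rw [h]; simp)
  have hnd : l.Nodup := (List.Perm.nodup_iff h1).mpr (List.nodup_range' (s := 1) (n := n))
  have hndAB : (A ++ B).Nodup := hflat ▸ hnd
  have hdisj : ∀ x ∈ A, x ∉ B := fun x hx hx' =>
    ((List.nodup_append'.mp hndAB).2.2) hx hx'
  have hmem : ∀ x ∈ l, x ∈ Finset.Icc 1 n := by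
    intro x hx
    have := (List.Perm.mem_iff h1).mp hx
    rw [List.mem_range'_1] at this
    rw [Finset.mem_Icc]
    omega
  have hmem' : ∀ x ∈ Finset.Icc 1 n, x ∈ l := by
    intro x hx
    rw [Finset.mem_Icc] at hx
    exact (List.Perm.mem_iff h1).mpr (by rw [List.mem_range'_1]; omega)
  refine ⟨A.toFinset, ?_, ?_, ?_⟩
  · intro x hx
    exact hmem x (hflat ▸ (List.mem_append.mpr (Or.inl (List.mem_toFinset.mp hx))))
  · constructor
    · have hbnd : Bnd A B := by
        have := runSplit_boundary l
        rw [h] at this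
        exact (List.isChain_cons_cons.mp this).1
      have hnlt : ¬ A.getLast hAne < B.head hBne :=
        hbnd _ (List.getLast?_eq_getLast hAne) _ (List.head?_eq_head hBne)
      have hamem : A.getLast hAne ∈ A := List.getLast_mem hAne
      have hbmem : B.head hBne ∈ B := List.head_mem hBne
      have hne : A.getLast hAne ≠ B.head hBne := by
        intro heq
        exact hdisj _ hamem (heq ▸ hbmem)
      refine ⟨A.getLast hAne, List.mem_toFinset.mpr hamem, B.head hBne, ?_, by omega⟩
      rw [Finset.mem_sdiff]
      refine ⟨hmem _ (hflat ▸ List.mem_append.mpr (Or.inr hbmem)), ?_⟩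
      rw [List.mem_toFinset]
      intro hbA
      exact hdisj _ hbA hbmem
    · obtain ⟨a, ha, b, hb, hab⟩ := h2 A B (by rw [h])
      refine ⟨a, List.mem_toFinset.mpr ha, b, ?_, hab⟩
      rw [Finset.mem_sdiff]
      refine ⟨hmem _ (hflat ▸ List.mem_append.mpr (Or.inr hb)), ?_⟩
      rw [List.mem_toFinset]
      intro hbA
      exact hdisj _ hbA hb
  · have hndA : A.Nodup := hndAB.of_append_left
    have hndB : B.Nodup := (List.nodup_append'.mp hndAB).2.1
    have hsortedA : A.Pairwise (· ≤ ·) :=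
      (List.isChain_iff_pairwise.mp hchainA).imp le_of_lt
    have hsortedB : B.Pairwise (· ≤ ·) :=
      (List.isChain_iff_pairwise.mp hchainB).imp le_of_lt
    have sortA : A.toFinset.sort (· ≤ ·) = A :=
      List.Perm.eq_of_pairwise' (Finset.pairwise_sort _ _) hsortedA ((Finset.sort_perm_toList A.toFinset (· ≤ ·)).trans
        (List.toFinset_toList hndA))
    have hcompl : Finset.Icc 1 n \ A.toFinset = B.toFinset := by
      ext x
      rw [Finset.mem_sdiff, List.mem_toFinset, List.mem_toFinset]
      constructor
      · rintro ⟨hx, hxA⟩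
        have := hmem' x hx
        rw [← hflat, List.mem_append] at this
        tauto
      · intro hxB
        exact ⟨hmem x (hflat ▸ List.mem_append.mpr (Or.inr hxB)),
          fun hxA => hdisj x hxA hxB⟩
    have sortB : (Finset.Icc 1 n \ A.toFinset).sort (· ≤ ·) = B := by
      rw [hcompl]
      exact List.Perm.eq_of_pairwise' (Finset.pairwise_sort _ _) hsortedB ((Finset.sort_perm_toList B.toFinset (· ≤ ·)).trans
        (List.toFinset_toList hndB))
    unfold listOf
    rw [sortA, sortB, hflat]

open Classical in
noncomputable def goodFinset (n : ℕ) : Finset (Finset ℕ) :=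
  (Finset.Icc 1 n).powerset.filter (Good n)

lemma card_goodFinset (n : ℕ) (hn : 1 ≤ n) : (goodFinset n).card = 2 ^ n - 2 * n := by
  classical
  set U := Finset.Icc 1 n with hU
  set P1 : Finset ℕ → Prop := fun S => ∀ a ∈ S, ∀ b ∈ U \ S, a ≤ b with hP1
  set P2 : Finset ℕ → Prop := fun S => ∀ a ∈ S, ∀ b ∈ U \ S, b ≤ a with hP2
  have hUcard : U.card = n := by rw [hU, Nat.card_Icc]; omega
  have hGF : goodFinset n = U.powerset.filter (fun S => ¬ (P1 S ∨ P2 S)) := by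
    unfold goodFinset
    refine Finset.filter_congr ?_
    intro S _
    simp only [Good, hP1, hP2, not_or, not_forall]
    constructor
    · rintro ⟨⟨a, ha, b, hb, hba⟩, ⟨a', ha', b', hb', hab'⟩⟩
      exact ⟨⟨a, ha, b, hb, by omega⟩, ⟨a', ha', b', hb', by omega⟩⟩
    · rintro ⟨⟨a, ha, b, hb, hba⟩, ⟨a', ha', b', hb', hab'⟩⟩
      exact ⟨⟨a, ha, b, hb, by omega⟩, ⟨a', ha', b', hb', by omega⟩⟩
  have hbad1 : U.powerset.filter P1 = (Finset.range (n + 1)).image (fun k => Finset.Icc 1 k) := by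
    ext S
    simp only [Finset.mem_filter, Finset.mem_powerset, Finset.mem_image, Finset.mem_range]
    constructor
    · rintro ⟨hsub, hp⟩
      rcases S.eq_empty_or_nonempty with rfl | hne
      · exact ⟨0, by omega, by simp⟩
      · refine ⟨S.max' hne, ?_, ?_⟩
        · have := hsub (S.max'_mem hne)
          rw [hU, Finset.mem_Icc] at this
          omega
        · symm
          ext x
          rw [Finset.mem_Icc]
          constructor
          · intro hx
            have h1 := hsub hx
            rw [hU, Finset.mem_Icc] at h1
            exact ⟨h1.1, S.le_max' x hx⟩
          · rintro ⟨h1, h2⟩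
            by_contra hxS
            have hxU : x ∈ U := by
              have := hsub (S.max'_mem hne)
              rw [hU, Finset.mem_Icc] at this ⊢
              omega
            have := hp (S.max' hne) (S.max'_mem hne) x (Finset.mem_sdiff.mpr ⟨hxU, hxS⟩)
            have : x = S.max' hne := by omega
            exact hxS (this ▸ S.max'_mem hne)
    · rintro ⟨k, hk, rfl⟩
      constructor
      · rw [hU]; exact Finset.Icc_subset_Icc le_rfl (by omega)
      · intro a ha b hb
        rw [Finset.mem_Icc] at ha
        rw [Finset.mem_sdiff, hU, Finset.mem_Icc, Finset.mem_Icc] at hb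
        omega
  have hbad2 : U.powerset.filter P2 = (Finset.Icc 1 (n + 1)).image (fun k => Finset.Icc k n) := by
    ext S
    simp only [Finset.mem_filter, Finset.mem_powerset, Finset.mem_image, Finset.mem_Icc]
    constructor
    · rintro ⟨hsub, hp⟩
      rcases S.eq_empty_or_nonempty with rfl | hne
      · exact ⟨n + 1, ⟨by omega, le_rfl⟩, by rw [Finset.Icc_eq_empty (by omega)]⟩
      · refine ⟨S.min' hne, ?_, ?_⟩
        · have := hsub (S.min'_mem hne)
          rw [hU, Finset.mem_Icc] at this
          omega
        · symm
          ext x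
          rw [Finset.mem_Icc]
          constructor
          · intro hx
            have h1 := hsub hx
            rw [hU, Finset.mem_Icc] at h1
            exact ⟨S.min'_le x hx, h1.2⟩
          · rintro ⟨h1, h2⟩
            by_contra hxS
            have hxU : x ∈ U := by
              have := hsub (S.min'_mem hne)
              rw [hU, Finset.mem_Icc] at this ⊢
              omega
            have := hp (S.min' hne) (S.min'_mem hne) x (Finset.mem_sdiff.mpr ⟨hxU, hxS⟩)
            have : x = S.min' hne := by omega
            exact hxS (this ▸ S.min'_mem hne)
    · rintro ⟨k, hk, rfl⟩
      constructor
      · rw [hU]; exact Finset.Icc_subset_Icc (by omega) le_rfl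
      · intro a ha b hb
        rw [Finset.mem_Icc] at ha
        rw [Finset.mem_sdiff, hU, Finset.mem_Icc, Finset.mem_Icc] at hb
        omega
  have hcard1 : (U.powerset.filter P1).card = n + 1 := by
    rw [hbad1, Finset.card_image_of_injOn, Finset.card_range]
    intro j hj k hk hjk
    have h := congrArg Finset.card hjk
    simp only [Nat.card_Icc] at h
    omega
  have hcard2 : (U.powerset.filter P2).card = n + 1 := by
    rw [hbad2, Finset.card_image_of_injOn, Nat.card_Icc]
    · omega
    intro j hj k hk hjk
    rw [Finset.mem_coe, Finset.mem_Icc] at hj hk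
    have h := congrArg Finset.card hjk
    simp only [Nat.card_Icc] at h
    omega
  have hinter : U.powerset.filter P1 ∩ U.powerset.filter P2 = {∅, U} := by
    rw [← Finset.filter_and]
    ext S
    simp only [Finset.mem_filter, Finset.mem_powerset, Finset.mem_insert, Finset.mem_singleton]
    constructor
    · rintro ⟨hsub, hp1, hp2⟩
      rcases S.eq_empty_or_nonempty with rfl | hne
      · exact Or.inl rfl
      · refine Or.inr (Finset.Subset.antisymm hsub ?_)
        intro x hx
        by_contra hxS
        obtain ⟨a, ha⟩ := hne
        have h1 := hp1 a ha x (Finset.mem_sdiff.mpr ⟨hx, hxS⟩)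
        have h2 := hp2 a ha x (Finset.mem_sdiff.mpr ⟨hx, hxS⟩)
        have : x = a := by omega
        exact hxS (this ▸ ha)
    · rintro (rfl | rfl)
      · exact ⟨Finset.empty_subset _, by simp [hP1], by simp [hP2]⟩
      · refine ⟨le_rfl, ?_, ?_⟩ <;>
        · intro a _ b hb
          rw [Finset.sdiff_self] at hb
          simp at hb
  have hintercard : ({∅, U} : Finset (Finset ℕ)).card = 2 := by
    refine Finset.card_pair ?_
    intro h
    have : (1 : ℕ) ∈ U := by rw [hU, Finset.mem_Icc]; omega
    rw [← h] at this
    simp at this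
  have hunion := Finset.card_union_add_card_inter (U.powerset.filter P1) (U.powerset.filter P2)
  rw [hinter, hintercard, hcard1, hcard2] at hunion
  have hbadcard : (U.powerset.filter (fun S => P1 S ∨ P2 S)).card = 2 * n := by
    rw [Finset.filter_or]
    omega
  have hkey := Finset.card_filter_add_card_filter_not
    (s := U.powerset) (p := fun S => P1 S ∨ P2 S)
  rw [hbadcard, Finset.card_powerset, hUcard] at hkey
  rw [hGF]
  omega


/-- For n ≥ 1, the number of pop-stacked permutations of size n with exactly two runs
is 2^n - 2n. -/
theorem count_popStacked_two_runs (n : ℕ) (hn : 1 ≤ n) :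
    Nat.card {l : List ℕ // IsPermList n l ∧ Overlapping l ∧ (runSplit l).length = 2} =
      2 ^ n - 2 * n := by
  classical
  have hmem : ∀ S : Finset ℕ, S ∈ goodFinset n ↔ S ⊆ Finset.Icc 1 n ∧ Good n S := by
    intro S
    unfold goodFinset
    rw [Finset.mem_filter, Finset.mem_powerset]
  have e : {S : Finset ℕ // S ∈ goodFinset n} ≃
      {l : List ℕ // IsPermList n l ∧ Overlapping l ∧ (runSplit l).length = 2} := by
    refine Equiv.ofBijective (fun S => ⟨listOf n S.1, ?_, ?_, ?_⟩) ⟨?_, ?_⟩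
    · exact isPermList_listOf ((hmem S.1).mp S.2).1
    · exact overlapping_listOf ((hmem S.1).mp S.2).2
    · rw [runSplit_listOf ((hmem S.1).mp S.2).2]; rfl
    · rintro ⟨S, hS⟩ ⟨S', hS'⟩ h
      apply Subtype.ext
      exact listOf_inj ((hmem S).mp hS).2 ((hmem S').mp hS').2 (congrArg Subtype.val h)
    · rintro ⟨l, h1, h2, h3⟩
      obtain ⟨S, hsub, hG, heq⟩ := good_of_popStacked h1 h2 h3
      exact ⟨⟨S, (hmem S).mpr ⟨hsub, hG⟩⟩, Subtype.ext heq⟩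
  rw [← Nat.card_congr e, Nat.card_eq_fintype_card, Fintype.card_coe, card_goodFinset n hn]
end

section
/- A permutation π is 1-pop-stack-sortable, i.e., T(π) = id, if and only if π is layered (a direct sum of decreasing permutations −id_{m_1}, …, −id_{m_s}). -/
/-- The layered permutation with layer sizes ms, starting at value s: the direct sum of
the decreasing permutations of the given sizes. -/
def layeredList : ℕ → List ℕ → List ℕ
  | _, [] => []
  | s, m :: ms => (List.range' s m).reverse ++ layeredList (s + m) ms

/-- A permutation is layered if it is the direct sum of decreasing permutations. -/
def IsLayered (l : List ℕ) : Prop :=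
  ∃ ms : List ℕ, (∀ m ∈ ms, 0 < m) ∧ l = layeredList 1 ms

lemma fallSplit_cons_shape (c : ℕ) (l : List ℕ) :
    ∃ bs gs, fallSplit (c :: l) = (c :: bs) :: gs := by
  unfold fallSplit
  rcases h : fallSplit l with _ | ⟨_ | ⟨b, bs⟩, gs⟩ <;> simp only []
  · exact ⟨[], [], rfl⟩
  · exact ⟨[], _, rfl⟩
  · split
    · exact ⟨b :: bs, gs, rfl⟩
    · exact ⟨[], _, rfl⟩

lemma fallSplit_flatten : ∀ l : List ℕ, (fallSplit l).flatten = l := by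
  intro l
  induction l with
  | nil => rfl
  | cons a rest ih =>
    unfold fallSplit
    rcases h : fallSplit rest with _ | ⟨_ | ⟨b, bs⟩, gs⟩ <;>
      rw [h] at ih <;> simp only [] <;> simp_all
    split <;> simp_all

lemma fallSplit_ne_nil : ∀ l : List ℕ, ∀ g ∈ fallSplit l, g ≠ [] := by
  intro l
  induction l with
  | nil => simp [fallSplit]
  | cons a rest ih =>
    intro g hg
    unfold fallSplit at hg
    rcases h : fallSplit rest with _ | ⟨_ | ⟨b, bs⟩, gs⟩ <;> rw [h] at hg <;>
      rw [h] at ih <;> simp only [] at hg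
    · simp_all
    · rcases List.mem_cons.mp hg with h' | h'
      · subst h'; simp
      · exact ih g h'
    · split at hg
      · rcases List.mem_cons.mp hg with h' | h'
        · subst h'; simp
        · exact ih g (by simp [h'])
      · rcases List.mem_cons.mp hg with h' | h'
        · subst h'; simp
        · exact ih g h' 

lemma fallSplit_cons_of_head (a b : ℕ) (bs : List ℕ) (gs : List (List ℕ)) (l : List ℕ)
    (h : fallSplit l = (b :: bs) :: gs) :
    fallSplit (a :: l) = if b < a then (a :: b :: bs) :: gs else [a] :: (b :: bs) :: gs := by
  unfold fallSplit
  rw [h]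

/-- key merging lemma -/
lemma fallSplit_layer : ∀ (m s : ℕ) (rest : List ℕ),
    (∀ b, rest.head? = some b → s ≤ b) →
    fallSplit ((List.range' s (m + 1)).reverse ++ rest)
      = (List.range' s (m + 1)).reverse :: fallSplit rest := by
  intro m
  induction m with
  | zero =>
    intro s rest h
    show fallSplit (s :: rest) = [s] :: fallSplit rest
    cases rest with
    | nil => rfl
    | cons c l =>
      obtain ⟨bs, gs, hsh⟩ := fallSplit_cons_shape c l
      rw [fallSplit_cons_of_head s c bs gs _ hsh, if_neg (by
        have := h c rfl; omega), hsh]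
  | succ k ih =>
    intro s rest h
    have hc : List.range' s (k + 1 + 1) = List.range' s (k + 1) ++ [s + (k + 1)] :=
      List.range'_1_concat (s := s) (n := k + 1)
    rw [hc, List.reverse_append, List.reverse_singleton, List.singleton_append,
      List.cons_append]
    have hrec := ih s rest h
    -- head of (range' s (k+1)).reverse is s + k
    have hhead : List.range' s (k + 1) = List.range' s k ++ [s + k] := List.range'_1_concat (s := s) (n := k)
    rw [hhead] at hrec ⊢
    rw [List.reverse_append, List.reverse_singleton, List.singleton_append] at hrec ⊢
    rw [List.cons_append] at hrec ⊢
    rw [fallSplit_cons_of_head (s + (k + 1)) (s + k) _ _ _ hrec, if_pos (by omega)]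

lemma mem_layeredList_ge : ∀ (ms : List ℕ) (s x : ℕ), x ∈ layeredList s ms → s ≤ x := by
  intro ms
  induction ms with
  | nil => simp [layeredList]
  | cons m ms ih =>
    intro s x hx
    unfold layeredList at hx
    rw [List.mem_append, List.mem_reverse] at hx
    rcases hx with hx | hx
    · rw [List.mem_range'_1] at hx; omega
    · have := ih (s + m) x hx; omega

lemma layeredList_length : ∀ (ms : List ℕ) (s : ℕ), (layeredList s ms).length = ms.sum := by
  intro ms
  induction ms with
  | nil => simp [layeredList]
  | cons m ms ih => intro s; simp [layeredList, ih]

lemma flipT_layeredList : ∀ (ms : List ℕ) (s : ℕ), (∀ m ∈ ms, 0 < m) →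
    flipT (layeredList s ms) = List.range' s ms.sum := by
  intro ms
  induction ms with
  | nil => intro s _; rfl
  | cons m ms ih =>
    intro s h
    obtain ⟨k, rfl⟩ : ∃ k, m = k + 1 := ⟨m - 1, by have := h m (by simp); omega⟩
    unfold layeredList
    rw [flipT, fallSplit_layer k s _ (fun b hb => by
      have : b ∈ layeredList (s + (k + 1)) ms := List.mem_of_mem_head? (by simp [hb])
      have := mem_layeredList_ge ms (s + (k + 1)) b this
      omega)]
    simp only [List.map_cons, List.flatten_cons, List.reverse_reverse]
    rw [← flipT, ih (s + (k + 1)) (fun x hx => h x (by simp [hx]))]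
    rw [List.range'_append_1 (s := s) (m := k + 1) (n := ms.sum)]
    simp [List.sum_cons]

lemma split_range' : ∀ (A B : List ℕ) (s k : ℕ), A ++ B = List.range' s k →
    A = List.range' s A.length ∧ B = List.range' (s + A.length) (k - A.length) := by
  intro A
  induction A with
  | nil => intro B s k h; simpa using h
  | cons a A ih =>
    intro B s k h
    rw [List.cons_append] at h
    obtain ⟨hs, hk, h⟩ := List.range'_eq_cons_iff.mp h.symm
    obtain ⟨h1, h2⟩ := ih B (a + 1) (k - 1) h
    subst hs
    constructor
    · rw [List.length_cons, List.range'_succ, ← h1]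
    · rw [h2, List.length_cons]
      congr 1 <;> omega

lemma layered_of_blocks : ∀ (gs : List (List ℕ)) (s k : ℕ),
    (∀ g ∈ gs, g ≠ []) → (gs.map List.reverse).flatten = List.range' s k →
    ∃ ms, (∀ m ∈ ms, 0 < m) ∧ gs.flatten = layeredList s ms := by
  intro gs
  induction gs with
  | nil => intro s k _ _; exact ⟨[], by simp, rfl⟩
  | cons g gs ih =>
    intro s k hne h
    rw [List.map_cons, List.flatten_cons] at h
    obtain ⟨h1, h2⟩ := split_range' g.reverse _ s k h
    rw [List.length_reverse] at h1 h2
    obtain ⟨ms, hpos, hflat⟩ := ih (s + g.length) (k - g.length)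
      (fun x hx => hne x (by simp [hx])) h2
    refine ⟨g.length :: ms, ?_, ?_⟩
    · intro m hm
      rcases List.mem_cons.mp hm with h' | h'
      · subst h'; exact List.length_pos_iff.mpr (hne g (by simp))
      · exact hpos m h' 
    · show (g :: gs).flatten = layeredList s (g.length :: ms)
      rw [List.flatten_cons, layeredList, ← h1, List.reverse_reverse, hflat]


/-- A permutation is 1-pop-stack-sortable (T(π) = id) iff it is layered. -/
theorem one_pop_stack_sortable_iff_layered (n : ℕ) (π : List ℕ) (hπ : IsPermList n π) :
    flipT π = List.range' 1 n ↔ IsLayered π := by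
  constructor
  · intro h
    obtain ⟨ms, hpos, hflat⟩ := layered_of_blocks (fallSplit π) 1 n (fallSplit_ne_nil π) h
    exact ⟨ms, hpos, by rw [← fallSplit_flatten π, hflat]⟩
  · rintro ⟨ms, hpos, rfl⟩
    rw [flipT_layeredList ms 1 hpos]
    congr 1
    have := hπ.length_eq
    rw [layeredList_length, List.length_range'] at this
    exact this
end
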